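/- Let (T,𝒳) be a tree-cut decomposition of a graph G and θ a positive integer. Then (T,𝒳) is θ-smooth if and only if for every C that is a node of T or a θ-cell of (T,𝒳), there exists no edge-cut [A,B] of G of order less than θ such that each of A and B is incident with at least (order of [A,B]) + 1 edges of the torso at C. -/

import Mathlib

/-- A finite multigraph (loops and parallel edges allowed): each edge in `E`
has an unordered pair of endpoints in `V`. -/
structure Multigraph (V E : Type) where
  ends : E → Sym2 V

namespace Multigraph

variable {V E : Type}

/-- The edge `e` has an end in the vertex set `A`. -/
def incident (G : Multigraph V E) (A : Set V) (e : E) : Prop :=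
  ∃ x ∈ G.ends e, x ∈ A

/-- The edge `e` has one end in `A` and one end in `B`. -/
def crosses (G : Multigraph V E) (A B : Set V) (e : E) : Prop :=
  G.incident A e ∧ G.incident B e

/-- The order of the edge-cut `[A,B]`: the number of edges with one end in `A`
and one end in `B`. -/
noncomputable def cutOrder (G : Multigraph V E) (A B : Set V) : ℕ :=
  {e | G.crosses A B e}.ncard

/-- `[A,B]` is an edge-cut of `G`: an ordered pair of disjoint vertex sets
covering all vertices. -/
def IsCut (G : Multigraph V E) (A B : Set V) : Prop :=
  Disjoint A B ∧ A ∪ B = Set.univ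

end Multigraph

/-- A tree-cut decomposition of `G`: a (finite) tree `T` together with pairwise
disjoint bags partitioning `V(G)`. -/
structure TreeCutDecomp {V E : Type} (G : Multigraph V E) (T : Type) where
  tree : SimpleGraph T
  isTree : tree.IsTree
  finite : Finite T
  bag : T → Set V
  disjoint_bags : ∀ s t : T, s ≠ t → Disjoint (bag s) (bag t)
  cover : ∀ v : V, ∃ t : T, v ∈ bag t

namespace TreeCutDecomp

variable {V E T : Type} {G : Multigraph V E}

/-- The set of nodes of the component of `T - t₁t₂` containing `t₁`. -/
def side (D : TreeCutDecomp G T) (t₁ t₂ : T) : Set T :=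
  {s | Relation.ReflTransGen
    (fun x y => D.tree.Adj x y ∧ ¬(x = t₁ ∧ y = t₂) ∧ ¬(x = t₂ ∧ y = t₁)) t₁ s}

/-- The union of the bags over the component of `T - t₁t₂` containing `t₁`. -/
def sideBags (D : TreeCutDecomp G T) (t₁ t₂ : T) : Set V :=
  ⋃ s ∈ D.side t₁ t₂, D.bag s

/-- The adhesion set of the tree edge `t₁t₂`: the edges of `G` with one end in
the bags on the `t₁` side and one end in the bags on the `t₂` side. -/
def adhEdges (D : TreeCutDecomp G T) (t₁ t₂ : T) : Set E :=
  {e | G.crosses (D.sideBags t₁ t₂) (D.sideBags t₂ t₁) e}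

/-- `x` and `y` are joined by a path of `T` avoiding the node set `C`. -/
def compRel (D : TreeCutDecomp G T) (C : Set T) (x y : T) : Prop :=
  Relation.ReflTransGen (fun a b => D.tree.Adj a b ∧ a ∉ C ∧ b ∉ C) x y

/-- The union of the bags over the component of `T - C` containing `s`. -/
def compBags (D : TreeCutDecomp G T) (C : Set T) (s : T) : Set V :=
  ⋃ s' ∈ {s' | D.compRel C s s'}, D.bag s'

/-- The edges of the torso at `C`, viewed as edges of `G`: those edges having
no component of `T - C` whose bags contain all their ends. -/
def torsoEdges (D : TreeCutDecomp G T) (C : Set T) : Set E :=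
  {e | ¬ ∃ s : T, s ∉ C ∧ ∀ x ∈ G.ends e, x ∈ D.compBags C s}

/-- `x` and `y` are joined in the forest obtained from `T` by deleting all edges
whose adhesion set has fewer than `θ` elements. -/
def cellRel (D : TreeCutDecomp G T) (θ : ℕ) (x y : T) : Prop :=
  Relation.ReflTransGen (fun a b => D.tree.Adj a b ∧ θ ≤ (D.adhEdges a b).ncard) x y

/-- A pseudo-`θ`-cell: a component of the forest obtained from `T` by deleting
all edges whose adhesion set has size less than `θ`. -/
def IsPseudoCell (D : TreeCutDecomp G T) (θ : ℕ) (C : Set T) : Prop :=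
  ∃ t : T, C = {s | D.cellRel θ t s}

/-- A `θ`-cell: a pseudo-`θ`-cell whose torso has at least `θ` edges. -/
def IsCell (D : TreeCutDecomp G T) (θ : ℕ) (C : Set T) : Prop :=
  D.IsPseudoCell θ C ∧ θ ≤ (D.torsoEdges C).ncard

/-- `(T,𝒳)` is `θ`-smooth. -/
def Smooth (D : TreeCutDecomp G T) (θ : ℕ) : Prop :=
  ∀ C : Set T, (D.IsCell θ C ∨ ∃ t : T, C = {t}) →
    ∀ Y Z : Set E, Y ⊆ D.torsoEdges C → Z ⊆ D.torsoEdges C →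
      Y.ncard = Z.ncard → Y.ncard ≤ θ →
      ¬ ∃ A B : Set V, G.IsCut A B ∧ G.cutOrder A B < Y.ncard ∧
        (∀ e ∈ Y, G.incident A e) ∧ (∀ e ∈ Z, G.incident B e)

end TreeCutDecomp

/-- `(T,𝒳)` is `θ`-smooth if and only if for every `C` that is a
node of `T` or a `θ`-cell of `(T,𝒳)`, there exists no edge-cut `[A,B]` of `G`
of order less than `θ` such that each of `A` and `B` is incident with at least
`|[A,B]| + 1` edges of the torso at `C`. -/
theorem thetaSmooth_iff {V E T : Type} [Fintype V] [Fintype E]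
    (G : Multigraph V E) (D : TreeCutDecomp G T) (θ : ℕ) (hθ : 0 < θ) :
    D.Smooth θ ↔
      ∀ C : Set T, (D.IsCell θ C ∨ ∃ t : T, C = {t}) →
        ¬ ∃ A B : Set V, G.IsCut A B ∧ G.cutOrder A B < θ ∧
          G.cutOrder A B + 1 ≤ {e | e ∈ D.torsoEdges C ∧ G.incident A e}.ncard ∧
          G.cutOrder A B + 1 ≤ {e | e ∈ D.torsoEdges C ∧ G.incident B e}.ncard := by
  constructor
  · intro hS C hC
    rintro ⟨A, B, hcut, hord, hA, hB⟩
    set k := G.cutOrder A B with hk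
    obtain ⟨Y, hYsub, hYcard⟩ := Set.exists_subset_card_eq (n := k + 1) hA
    obtain ⟨Z, hZsub, hZcard⟩ := Set.exists_subset_card_eq (n := k + 1) hB
    refine hS C hC Y Z (fun e he => (hYsub he).1) (fun e he => (hZsub he).1)
      (by rw [hYcard, hZcard]) (by rw [hYcard]; omega)
      ⟨A, B, hcut, by rw [hYcard]; omega, fun e he => (hYsub he).2,
        fun e he => (hZsub he).2⟩
  · intro hS C hC Y Z hY hZ hYZ hYθ
    rintro ⟨A, B, hcut, hord, hAY, hBZ⟩
    refine hS C hC ⟨A, B, hcut, by omega, ?_, ?_⟩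
    · have hsub : Y ⊆ {e | e ∈ D.torsoEdges C ∧ G.incident A e} :=
        fun e he => ⟨hY he, hAY e he⟩
      calc G.cutOrder A B + 1 ≤ Y.ncard := hord
        _ ≤ _ := Set.ncard_le_ncard hsub (Set.toFinite _)
    · have hsub : Z ⊆ {e | e ∈ D.torsoEdges C ∧ G.incident B e} :=
        fun e he => ⟨hZ he, hBZ e he⟩
      calc G.cutOrder A B + 1 ≤ Z.ncard := hYZ ▸ hord
        _ ≤ _ := Set.ncard_le_ncard hsub (Set.toFinite _)
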